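/- Let H be a Multinomial(m, p) random vector over k ≥ 2 categories with all p(i) > 0. Then the collision probability Σ_h Pr(H = h)² satisfies Σ_h Pr(H = h)² = O(m^{(1−k)/2} · polylog corrections), and in particular for any sequence m_n = ω(n^{4/(k−1)}), n² · Σ_h Pr(H = h_n)² → 0 as n → ∞ (with m = m_n). -/

import Mathlib

set_option maxHeartbeats 1000000

open Filter Finset Nat

namespace HistAux

variable {k : ℕ}

/-- histogram of a sequence -/
def hist {m : ℕ} (X : Fin m → Fin k) : Fin k → ℕ :=
  fun c => (Finset.univ.filter fun j => X j = c).card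

lemma sum_hist {m : ℕ} (X : Fin m → Fin k) : ∑ c, hist X c = m := by
  classical
  have := Finset.card_eq_sum_card_fiberwise
    (f := X) (s := (univ : Finset (Fin m))) (t := univ) (fun x _ => mem_univ _)
  simpa [hist] using this.symm

lemma hist_snoc {m : ℕ} (X : Fin m → Fin k) (c d : Fin k) :
    hist (Fin.snoc X c) d = hist X d + if c = d then 1 else 0 := by
  classical
  simp only [hist, Finset.card_filter, Fin.sum_univ_castSucc, Fin.snoc_castSucc, Fin.snoc_last]

lemma count_mul (m : ℕ) (h : Fin k → ℕ) (hs : ∑ c, h c = m) :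
    (Finset.univ.filter fun X : Fin m → Fin k => hist X = h).card * ∏ c, (h c)! = m ! := by
  classical
  induction m generalizing h with
  | zero =>
    have hz : ∀ c, h c = 0 := fun c => Finset.sum_eq_zero_iff.mp hs c (mem_univ c)
    have h0 : h = fun _ => 0 := funext hz
    have huniv : (Finset.univ.filter fun X : Fin 0 → Fin k => hist X = h) = univ := by
      apply Finset.filter_true_of_mem
      intro X _
      funext d
      simp [hist, h0]
    rw [huniv, h0]
    simp [Finset.card_univ]
  | succ m ih =>
    have key : ∀ c : Fin k,
        (Finset.univ.filter fun X : Fin (m+1) → Fin k => hist X = h ∧ X (Fin.last m) = c).card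
            * ∏ d, (h d)!
          = h c * m ! := by
      intro c
      by_cases hc : 1 ≤ h c
      · obtain ⟨h', hrel⟩ : ∃ h' : Fin k → ℕ, ∀ d, h' d + (if c = d then 1 else 0) = h d := by
          refine ⟨Function.update h c (h c - 1), fun d => ?_⟩
          by_cases hd : d = c
          · subst hd; rw [Function.update_self, if_pos rfl]; omega
          · simp [Function.update_of_ne hd, Ne.symm hd]
        have hs' : ∑ d, h' d = m := by
          have h1 : ∑ d, (h' d + (if c = d then 1 else 0)) = m + 1 := by
            rw [Finset.sum_congr rfl (fun d _ => hrel d)]; exact hs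
          simp only [Finset.sum_add_distrib, Finset.sum_ite_eq, mem_univ, if_true] at h1
          omega
        have hcard : (Finset.univ.filter fun X : Fin (m+1) → Fin k =>
              hist X = h ∧ X (Fin.last m) = c).card
            = (Finset.univ.filter fun X' : Fin m → Fin k => hist X' = h').card := by
          refine Finset.card_bij' (fun X _ => Fin.init X) (fun X' _ => Fin.snoc X' c)
            ?_ ?_ ?_ ?_
          · intro X hX
            rw [Finset.mem_filter] at hX
            obtain ⟨-, hXh, hXc⟩ := hX
            have hX2 : Fin.snoc (Fin.init X) c = X := by
              have h5 := Fin.snoc_init_self X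
              rw [hXc] at h5
              exact h5
            refine Finset.mem_filter.mpr ⟨mem_univ _, funext fun d => ?_⟩
            have h3 := hist_snoc (Fin.init X) c d
            rw [hX2, hXh] at h3
            have h4 := hrel d
            rw [← h4] at h3
            exact (Nat.add_right_cancel h3).symm
          · intro X' hX'
            rw [Finset.mem_filter] at hX'
            obtain ⟨-, hX'h⟩ := hX'
            refine Finset.mem_filter.mpr ⟨mem_univ _, funext fun d => ?_, Fin.snoc_last _ _⟩
            rw [hist_snoc, hX'h]
            exact hrel d
          · intro X hX
            rw [Finset.mem_filter] at hX
            have h5 := Fin.snoc_init_self X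
            rw [hX.2.2] at h5
            exact h5
          · intro X' _
            exact Fin.init_snoc (α := fun _ => Fin k) c X'
        have hceq : h c = h' c + 1 := by
          have h6 := hrel c
          rw [if_pos rfl] at h6
          exact h6.symm
        have hprod : ∏ d, (h d)! = h c * ∏ d, (h' d)! := by
          have herase : ∀ d ∈ univ.erase c, (h d)! = (h' d)! := by
            intro d hd
            have h6 := hrel d
            rw [if_neg (fun hcd => (Finset.mem_erase.mp hd).1 hcd.symm)] at h6
            rw [Nat.add_zero] at h6
            rw [← h6]
          rw [← Finset.mul_prod_erase univ (fun d => (h d)!) (mem_univ c),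
            ← Finset.mul_prod_erase univ (fun d => (h' d)!) (mem_univ c),
            Finset.prod_congr rfl herase, hceq, Nat.factorial_succ, mul_assoc]
        rw [hcard, hprod, ← mul_assoc, mul_comm _ (h c), mul_assoc, ih h' hs']
      · have hc0 : h c = 0 := by omega
        have hemp : (Finset.univ.filter fun X : Fin (m+1) → Fin k =>
            hist X = h ∧ X (Fin.last m) = c) = ∅ := by
          rw [Finset.filter_eq_empty_iff]
          rintro X - ⟨hXh, hXc⟩
          have hlt : 0 < hist X c :=
            Finset.card_pos.mpr ⟨Fin.last m, by simp [hXc]⟩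
          rw [hXh] at hlt
          omega
        rw [hemp, hc0]
        simp
    have h8 : (Finset.univ.filter fun X : Fin (m+1) → Fin k => hist X = h).card
        = ∑ c : Fin k, (Finset.univ.filter
            (fun X : Fin (m+1) → Fin k => hist X = h ∧ X (Fin.last m) = c)).card := by
      rw [Finset.card_eq_sum_card_fiberwise
        (f := fun X : Fin (m+1) → Fin k => X (Fin.last m)) (t := univ) (fun X _ => mem_univ _)]
      exact Finset.sum_congr rfl fun c _ => by rw [Finset.filter_filter]
    rw [h8, Finset.sum_mul, Finset.sum_congr rfl (fun c _ => key c),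
      ← Finset.sum_mul, hs, Nat.factorial_succ]


/-- helper: product over a function updated at two distinct points -/
lemma prod_update2 {M : Type*} [CommSemiring M] {k : ℕ} (F : Fin k → ℕ → M) (h : Fin k → ℕ)
    (i j : Fin k) (hij : i ≠ j) (a b : ℕ) :
    (∏ d, F d (Function.update (Function.update h i a) j b d)) * (F i (h i) * F j (h j))
      = (∏ d, F d (h d)) * (F i a * F j b) := by
  classical
  set h' := Function.update (Function.update h i a) j b with hh'
  have hj' : h' j = b := by rw [hh', Function.update_self]
  have hi' : h' i = a := by
    rw [hh', Function.update_of_ne hij, Function.update_self]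
  have hmem : i ∈ univ.erase j := Finset.mem_erase.mpr ⟨hij, mem_univ i⟩
  have e1 : ∏ d, F d (h' d)
      = F j b * (F i a * ∏ d ∈ (univ.erase j).erase i, F d (h' d)) := by
    rw [← Finset.mul_prod_erase univ (fun d => F d (h' d)) (mem_univ j), hj',
      ← Finset.mul_prod_erase (univ.erase j) (fun d => F d (h' d)) hmem, hi']
  have e2 : ∏ d, F d (h d)
      = F j (h j) * (F i (h i) * ∏ d ∈ (univ.erase j).erase i, F d (h d)) := by
    rw [← Finset.mul_prod_erase univ (fun d => F d (h d)) (mem_univ j),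
      ← Finset.mul_prod_erase (univ.erase j) (fun d => F d (h d)) hmem]
  have e3 : ∏ d ∈ (univ.erase j).erase i, F d (h' d)
      = ∏ d ∈ (univ.erase j).erase i, F d (h d) := by
    refine Finset.prod_congr rfl fun d hd => ?_
    have hd1 := (Finset.mem_erase.mp hd).1
    have hd2 := (Finset.mem_erase.mp (Finset.mem_erase.mp hd).2).1
    rw [hh', Function.update_of_ne hd2, Function.update_of_ne hd1]
  rw [e1, e2, e3]
  ring

section Dist

variable {k : ℕ} (p : Fin k → ℝ)

lemma prod_eq_pow_hist {m : ℕ} (X : Fin m → Fin k) :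
    ∏ j, p (X j) = ∏ c, p c ^ hist X c := by
  classical
  rw [← Finset.prod_fiberwise univ X (fun j => p (X j))]
  refine Finset.prod_congr rfl fun c _ => ?_
  rw [Finset.prod_congr rfl (fun j hj => congrArg p (Finset.mem_filter.mp hj).2),
    Finset.prod_const]
  rfl

/-- the probability that the histogram equals `h` -/
noncomputable def Qf (m : ℕ) (h : Fin k → ℕ) : ℝ :=
  ∑ X ∈ Finset.univ.filter (fun X : Fin m → Fin k => hist X = h), ∏ j, p (X j)

lemma Qf_eq (m : ℕ) (h : Fin k → ℕ) :
    Qf p m h = ((Finset.univ.filter fun X : Fin m → Fin k => hist X = h).card : ℝ)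
      * ∏ c, p c ^ h c := by
  classical
  rw [Qf, Finset.sum_congr rfl (fun X hX => ?_), Finset.sum_const, nsmul_eq_mul]
  rw [prod_eq_pow_hist, (Finset.mem_filter.mp hX).2]

lemma Qf_nonneg (hpos : ∀ i, 0 < p i) (m : ℕ) (h : Fin k → ℕ) : 0 ≤ Qf p m h :=
  Finset.sum_nonneg fun X _ => Finset.prod_nonneg fun j _ => (hpos (X j)).le

lemma sum_w (hsum : ∑ i, p i = 1) (m : ℕ) :
    ∑ X : Fin m → Fin k, ∏ j, p (X j) = 1 := by
  classical
  have := Finset.prod_univ_sum (fun _ : Fin m => (univ : Finset (Fin k)))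
    (fun _ i => p i)
  rw [Fintype.piFinset_univ] at this
  rw [← this, Finset.prod_congr rfl fun j _ => hsum, Finset.prod_const, one_pow]

lemma Qf_le_one (hpos : ∀ i, 0 < p i) (hsum : ∑ i, p i = 1) (m : ℕ) (h : Fin k → ℕ) :
    Qf p m h ≤ 1 := by
  classical
  rw [Qf, ← sum_w p hsum m]
  exact Finset.sum_le_sum_of_subset_of_nonneg (Finset.filter_subset _ _)
    (fun X _ _ => Finset.prod_nonneg fun j _ => (hpos (X j)).le)

end Dist

/-- Stirling-type bounds on the factorial. -/
lemma exists_stirling : ∃ c1 c2 : ℝ, 0 < c1 ∧ 0 < c2 ∧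
    ∀ n : ℕ, 1 ≤ n →
      c1 * (Real.sqrt (2*n) * ((n : ℝ) / Real.exp 1)^n) ≤ n !
      ∧ (n ! : ℝ) ≤ c2 * (Real.sqrt (2*n) * ((n : ℝ) / Real.exp 1)^n) := by
  obtain ⟨c1, hc1, hlow⟩ := Stirling.stirlingSeq'_bounded_by_pos_constant
  refine ⟨c1, Stirling.stirlingSeq 1, hc1, Stirling.stirlingSeq'_pos 0, fun n hn => ?_⟩
  obtain ⟨j, rfl⟩ : ∃ j, n = j + 1 := ⟨n - 1, by omega⟩
  have hd : 0 < Real.sqrt (2*(j+1)) * (((j+1 : ℕ) : ℝ) / Real.exp 1)^(j+1) := by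
    apply mul_pos (Real.sqrt_pos.mpr (by positivity))
    apply pow_pos
    apply div_pos (by exact_mod_cast Nat.succ_pos j) (Real.exp_pos 1)
  have hfact : ((j+1)! : ℝ)
      = Stirling.stirlingSeq (j+1) * (Real.sqrt (2*(j+1)) * (((j+1:ℕ) : ℝ) / Real.exp 1)^(j+1)) := by
    rw [Stirling.stirlingSeq]
    field_simp
    norm_num
  constructor
  · rw [hfact]
    push_cast
    exact mul_le_mul_of_nonneg_right (by exact_mod_cast hlow j) (by positivity)
  · rw [hfact]
    push_cast
    refine mul_le_mul_of_nonneg_right ?_ (by positivity)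
    exact Stirling.stirlingSeq'_antitone (Nat.zero_le j)

/-- Gibbs inequality. -/
lemma gibbs {k : ℕ} (p : Fin k → ℝ) (hpos : ∀ i, 0 < p i) (hsum : ∑ i, p i = 1)
    (m : ℕ) (hm : 0 < m) (h : Fin k → ℕ) (hs : ∑ c, h c = m) (hc : ∀ c, 0 < h c) :
    ∏ c, ((m : ℝ) * p c / h c) ^ h c ≤ 1 := by
  classical
  have hx : ∀ c : Fin k, (0:ℝ) < (m : ℝ) * p c / h c := fun c => by
    have := hpos c
    have := hc c
    positivity
  have hP : (0:ℝ) < ∏ c, ((m : ℝ) * p c / h c) ^ h c :=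
    Finset.prod_pos fun c _ => pow_pos (hx c) _
  have hlog : Real.log (∏ c, ((m : ℝ) * p c / h c) ^ h c) ≤ 0 := by
    rw [Real.log_prod (fun c _ => (pow_pos (hx c) _).ne')]
    have hterm : ∀ c : Fin k, Real.log (((m : ℝ) * p c / h c) ^ h c)
        ≤ (m : ℝ) * p c - h c := by
      intro c
      rw [Real.log_pow]
      have h1 : Real.log ((m : ℝ) * p c / h c) ≤ (m : ℝ) * p c / h c - 1 :=
        Real.log_le_sub_one_of_pos (hx c)
      have h2 : (h c : ℝ) * ((m : ℝ) * p c / h c - 1) = (m:ℝ) * p c - h c := by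
        have hne : (h c : ℝ) ≠ 0 := Nat.cast_ne_zero.mpr (hc c).ne'
        field_simp
      calc (h c : ℝ) * Real.log ((m : ℝ) * p c / h c)
          ≤ (h c : ℝ) * ((m : ℝ) * p c / h c - 1) :=
            mul_le_mul_of_nonneg_left h1 (by positivity)
        _ = (m:ℝ) * p c - h c := h2
    calc ∑ c, Real.log (((m : ℝ) * p c / h c) ^ h c)
        ≤ ∑ c, ((m : ℝ) * p c - h c) := Finset.sum_le_sum fun c _ => hterm c
      _ = (m:ℝ) * ∑ c, p c - ∑ c, (h c : ℝ) := by
          rw [Finset.sum_sub_distrib, Finset.mul_sum]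
      _ = 0 := by
          rw [hsum, mul_one]
          have : ∑ c, (h c : ℝ) = (m : ℝ) := by exact_mod_cast congrArg Nat.cast hs
          rw [this, sub_self]
  by_contra hcon
  push_neg at hcon
  have := Real.log_pos hcon
  linarith


lemma sum_update2 {k : ℕ} (h : Fin k → ℕ) (i j : Fin k) (hij : i ≠ j) (a b : ℕ) :
    (∑ d, Function.update (Function.update h i a) j b d) + (h i + h j)
      = (∑ d, h d) + (a + b) := by
  classical
  set h' := Function.update (Function.update h i a) j b with hh'
  have hj' : h' j = b := by rw [hh', Function.update_self]
  have hi' : h' i = a := by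
    rw [hh', Function.update_of_ne hij, Function.update_self]
  have hmem : i ∈ univ.erase j := Finset.mem_erase.mpr ⟨hij, mem_univ i⟩
  have e1 : ∑ d, h' d = b + (a + ∑ d ∈ (univ.erase j).erase i, h' d) := by
    rw [← Finset.add_sum_erase univ h' (mem_univ j), hj',
      ← Finset.add_sum_erase (univ.erase j) h' hmem, hi']
  have e2 : ∑ d, h d = h j + (h i + ∑ d ∈ (univ.erase j).erase i, h d) := by
    rw [← Finset.add_sum_erase univ h (mem_univ j),
      ← Finset.add_sum_erase (univ.erase j) h hmem]
  have e3 : ∑ d ∈ (univ.erase j).erase i, h' d = ∑ d ∈ (univ.erase j).erase i, h d := by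
    refine Finset.sum_congr rfl fun d hd => ?_
    have hd1 := (Finset.mem_erase.mp hd).1
    have hd2 := (Finset.mem_erase.mp (Finset.mem_erase.mp hd).2).1
    rw [hh', Function.update_of_ne hd2, Function.update_of_ne hd1]
  rw [e1, e2, e3]
  ring

lemma Qf_le {k : ℕ} (hk : 2 ≤ k) (p : Fin k → ℝ) (hpos : ∀ i, 0 < p i)
    (hsum : ∑ i, p i = 1) :
    ∃ C : ℝ, 0 < C ∧ ∀ m : ℕ, 1 ≤ m → ∀ h : Fin k → ℕ,
      Qf p m h ≤ C * (m : ℝ) ^ (((1:ℝ) - k) / 2) := by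
  classical
  haveI : Nonempty (Fin k) := ⟨⟨0, by omega⟩⟩
  obtain ⟨i0, -, hδ⟩ := Finset.exists_min_image (univ : Finset (Fin k)) p univ_nonempty
  set δ := p i0 with hδdef
  have hδpos : 0 < δ := hpos i0
  obtain ⟨c1, c2, hc1, hc2, hstir⟩ := exists_stirling
  set M : ℕ := max 1 ⌈(2:ℝ)/δ⌉₊ with hM
  have hMδ : ∀ m : ℕ, M ≤ m → 2 ≤ (m:ℝ) * δ := by
    intro m hm
    have h1 : ⌈(2:ℝ)/δ⌉₊ ≤ m := le_trans (le_max_right _ _) hm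
    have h2 : (2:ℝ)/δ ≤ m := (Nat.ceil_le.mp h1)
    rw [div_le_iff₀ hδpos] at h2
    linarith
  set C0 : ℝ := c2 * Real.sqrt 2 / (c1 ^ k * ∏ c, Real.sqrt (p c)) with hC0def
  have hprodp : 0 < ∏ c, Real.sqrt (p c) :=
    Finset.prod_pos fun c _ => Real.sqrt_pos.mpr (hpos c)
  have hC0 : 0 < C0 := by
    apply _root_.div_pos (mul_pos hc2 (by positivity)) (mul_pos (pow_pos hc1 k) hprodp)
  have main : ∀ m : ℕ, M ≤ m → ∀ h : Fin k → ℕ,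
      Qf p m h ≤ C0 * (m : ℝ) ^ (((1:ℝ) - k) / 2) := by
    intro m hmM h
    have hm1 : 1 ≤ m := le_trans (le_max_left _ _) hmM
    have hmpos : (0:ℝ) < m := by exact_mod_cast hm1
    -- the set of achievable histograms
    set s : Finset (Fin k → ℕ) :=
      Finset.image (fun X : Fin m → Fin k => hist X) Finset.univ with hsdef
    have hsne : s.Nonempty := (Finset.univ_nonempty).image _
    obtain ⟨hstar, hstarmem, hstarmax⟩ := Finset.exists_max_image s (Qf p m) hsne
    obtain ⟨X0, -, hX0⟩ := Finset.mem_image.mp hstarmem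
    have hstarsum : ∑ c, hstar c = m := by rw [← hX0]; exact sum_hist X0
    -- reduce to the maximum
    have hred : Qf p m h ≤ Qf p m hstar := by
      by_cases hhs : h ∈ s
      · exact hstarmax h hhs
      · have : (Finset.univ.filter fun X : Fin m → Fin k => hist X = h) = ∅ := by
          rw [Finset.filter_eq_empty_iff]
          intro X _ hX
          exact hhs (Finset.mem_image.mpr ⟨X, mem_univ X, hX⟩)
        rw [Qf, this, Finset.sum_empty]
        exact Qf_nonneg p hpos m hstar
    refine le_trans hred ?_
    -- exchange argument
    have hexch : ∀ i j : Fin k, (hstar i : ℝ) * p j ≤ ((hstar j : ℝ) + 1) * p i := by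
      intro i j
      rcases eq_or_ne i j with rfl | hij
      · have := (hpos i).le
        have : (hstar i : ℝ) ≤ (hstar i : ℝ) + 1 := by linarith
        exact mul_le_mul_of_nonneg_right this (hpos i).le
      rcases Nat.eq_zero_or_pos (hstar i) with hzero | hipos
      · rw [hzero]
        push_cast
        rw [zero_mul]
        exact mul_nonneg (by positivity) (hpos i).le
      obtain ⟨a, ha⟩ : ∃ a, hstar i = a + 1 := ⟨hstar i - 1, by omega⟩
      set h' : Fin k → ℕ := Function.update (Function.update hstar i a) j (hstar j + 1)
        with hh'def
      have hsum2 := sum_update2 hstar i j hij a (hstar j + 1)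
      rw [hstarsum] at hsum2
      have hs' : ∑ d, h' d = m := by rw [← hh'def] at hsum2; omega
      -- counts
      have hcount := count_mul m hstar hstarsum
      have hcount' := count_mul m h' hs'
      set N : ℕ := (Finset.univ.filter fun X : Fin m → Fin k => hist X = hstar).card
        with hNdef
      set N' : ℕ := (Finset.univ.filter fun X : Fin m → Fin k => hist X = h').card
        with hN'def
      have hNpos : 0 < N := by
        refine Finset.card_pos.mpr ⟨X0, ?_⟩
        rw [Finset.mem_filter]
        exact ⟨mem_univ _, hX0⟩
      have hN'pos : 0 < N' := by
        rcases Nat.eq_zero_or_pos N' with hz | hp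
        · exfalso
          rw [hz, zero_mul] at hcount'
          exact (Nat.factorial_pos m).ne' hcount'.symm
        · exact hp
      have hh's : h' ∈ s := by
        obtain ⟨X', hX'⟩ := Finset.card_pos.mp hN'pos
        rw [Finset.mem_filter] at hX'
        exact Finset.mem_image.mpr ⟨X', mem_univ _, hX'.2⟩
      have hQle : Qf p m h' ≤ Qf p m hstar := hstarmax h' hh's
      -- factorial identity
      have hfact := prod_update2 (fun _ n => n !) hstar i j hij a (hstar j + 1)
      rw [← hh'def] at hfact
      -- power identity
      have hpow := prod_update2 (fun d n => p d ^ n) hstar i j hij a (hstar j + 1)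
      rw [← hh'def] at hpow
      set u : ℕ := ∏ d, (hstar d)! with hudef
      set u' : ℕ := ∏ d, (h' d)! with hu'def
      set P : ℝ := ∏ d, p d ^ hstar d with hPdef
      set P' : ℝ := ∏ d, p d ^ h' d with hP'def
      have hupos : 0 < u := Finset.prod_pos fun d _ => Nat.factorial_pos _
      have hPpos : 0 < P := Finset.prod_pos fun d _ => pow_pos (hpos d) _
      have hP'pos : 0 < P' := Finset.prod_pos fun d _ => pow_pos (hpos d) _
      -- simplify the factorial identity: u' * (a+1) = u * (hstar j + 1)
      have hfact2 : u' * (a + 1) = u * (hstar j + 1) := by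
        rw [ha] at hfact
        have expand : u' * ((a+1)! * (hstar j)!) = u * (a ! * (hstar j + 1)!) := hfact
        rw [Nat.factorial_succ a, Nat.factorial_succ (hstar j)] at expand
        have hcancel : 0 < a ! * (hstar j)! :=
          Nat.mul_pos (Nat.factorial_pos a) (Nat.factorial_pos _)
        apply Nat.eq_of_mul_eq_mul_right hcancel
        calc u' * (a+1) * (a ! * (hstar j)!) = u' * ((a+1) * a ! * (hstar j)!) := by ring
          _ = u * (a ! * ((hstar j + 1) * (hstar j)!)) := expand
          _ = u * (hstar j + 1) * (a ! * (hstar j)!) := by ring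
      -- N relation : N' * (hstar j + 1) = N * (a + 1)
      have hNrel : N' * (hstar j + 1) = N * (a + 1) := by
        have e : N' * (hstar j + 1) * (u * u') = N * (a + 1) * (u * u') := by
          calc N' * (hstar j + 1) * (u * u') = (N' * u') * ((hstar j + 1) * u) := by ring
            _ = m ! * (u' * (a+1)) := by rw [hcount', hfact2]; ring
            _ = (N * u) * ((a+1) * u') := by rw [hcount]; ring
            _ = N * (a + 1) * (u * u') := by ring
        exact Nat.eq_of_mul_eq_mul_right (Nat.mul_pos hupos
          (Finset.prod_pos fun d _ => Nat.factorial_pos _)) e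
      -- power relation : P' * p i = P * p j
      have hPrel : P' * p i = P * p j := by
        rw [ha] at hpow
        have expand : P' * (p i ^ (a+1) * p j ^ hstar j)
            = P * (p i ^ a * p j ^ (hstar j + 1)) := hpow
        have hne : p i ^ a * p j ^ hstar j ≠ 0 :=
          (mul_pos (pow_pos (hpos i) a) (pow_pos (hpos j) _)).ne'
        apply mul_right_cancel₀ hne
        calc P' * p i * (p i ^ a * p j ^ hstar j)
            = P' * (p i ^ (a+1) * p j ^ hstar j) := by ring
          _ = P * (p i ^ a * p j ^ (hstar j + 1)) := expand
          _ = P * p j * (p i ^ a * p j ^ hstar j) := by ring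
      -- combine
      have hQstar : Qf p m hstar = (N : ℝ) * P := Qf_eq p m hstar
      have hQ' : Qf p m h' = (N' : ℝ) * P' := Qf_eq p m h'
      rw [hQstar, hQ'] at hQle
      have hNrelR : (N' : ℝ) * ((hstar j : ℝ) + 1) = (N : ℝ) * ((a : ℝ) + 1) := by
        exact_mod_cast congrArg (Nat.cast : ℕ → ℝ) hNrel
      have hkey : ((hstar i : ℝ)) * p j * ((N:ℝ) * P)
          = ((N':ℝ) * P') * (((hstar j : ℝ) + 1) * p i) := by
        rw [ha]
        push_cast
        linear_combination (-(P * p j)) * hNrelR - ((N':ℝ) * (((hstar j : ℕ):ℝ)+1)) * hPrel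
      have hNPpos : (0:ℝ) < (N:ℝ) * P := by
        apply mul_pos _ hPpos
        exact_mod_cast hNpos
      have hstep : ((hstar i : ℝ)) * p j * ((N:ℝ) * P)
          ≤ (((hstar j : ℝ) + 1) * p i) * ((N:ℝ) * P) := by
        rw [hkey]
        have h9 : (0:ℝ) ≤ ((hstar j : ℝ) + 1) * p i :=
          mul_nonneg (by positivity) (hpos i).le
        calc ((N':ℝ) * P') * (((hstar j : ℝ) + 1) * p i)
            ≤ ((N:ℝ) * P) * (((hstar j : ℝ) + 1) * p i) :=
              mul_le_mul_of_nonneg_right hQle h9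
          _ = (((hstar j : ℝ) + 1) * p i) * ((N:ℝ) * P) := by ring
      exact le_of_mul_le_mul_right hstep hNPpos
    -- coordinates of the maximizer are large
    have hlarge : ∀ j : Fin k, (m:ℝ) * p j ≤ (hstar j : ℝ) + 1 := by
      intro j
      have hsumi : ∑ i : Fin k, (hstar i : ℝ) * p j
          ≤ ∑ i : Fin k, ((hstar j : ℝ) + 1) * p i :=
        Finset.sum_le_sum fun i _ => hexch i j
      have hL : ∑ i : Fin k, (hstar i : ℝ) * p j = (m:ℝ) * p j := by
        rw [← Finset.sum_mul]
        congr 1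
        exact_mod_cast congrArg (Nat.cast : ℕ → ℝ) hstarsum
      have hR : ∑ i : Fin k, ((hstar j : ℝ) + 1) * p i = (hstar j : ℝ) + 1 := by
        rw [← Finset.mul_sum, hsum, mul_one]
      rw [hL, hR] at hsumi
      exact hsumi
    have hhalf : ∀ c : Fin k, (m:ℝ) * p c / 2 ≤ (hstar c : ℝ) := by
      intro c
      have h2 : 2 ≤ (m:ℝ) * δ := hMδ m hmM
      have h3 : δ ≤ p c := hδ c (mem_univ c)
      have h4 : (m:ℝ) * δ ≤ (m:ℝ) * p c := by
        apply mul_le_mul_of_nonneg_left h3 (by positivity)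
      have := hlarge c
      nlinarith
    have hone : ∀ c : Fin k, 1 ≤ hstar c := by
      intro c
      have h2 : 2 ≤ (m:ℝ) * δ := hMδ m hmM
      have h3 : δ ≤ p c := hδ c (mem_univ c)
      have h4 : (m:ℝ) * δ ≤ (m:ℝ) * p c := by
        apply mul_le_mul_of_nonneg_left h3 (by positivity)
      have h5 := hhalf c
      have : (1:ℝ) ≤ (hstar c : ℝ) := by nlinarith
      exact_mod_cast this
    -- Stirling estimate
    have hcount := count_mul m hstar hstarsum
    set N : ℕ := (Finset.univ.filter fun X : Fin m → Fin k => hist X = hstar).card with hNdef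
    set P : ℝ := ∏ c, p c ^ hstar c with hPdef
    set u : ℕ := ∏ c, (hstar c)! with hudef
    have hupos : (0:ℝ) < (u:ℝ) := by
      have : 0 < u := Finset.prod_pos fun c _ => Nat.factorial_pos _
      exact_mod_cast this
    have hPpos : 0 < P := Finset.prod_pos fun c _ => pow_pos (hpos c) _
    have hQstar : Qf p m hstar = (N:ℝ) * P := Qf_eq p m hstar
    have hNreal : (N:ℝ) * (u:ℝ) = (m ! : ℝ) := by
      exact_mod_cast congrArg (Nat.cast : ℕ → ℝ) hcount
    have hQform : Qf p m hstar = (m ! : ℝ) * P / (u:ℝ) := by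
      rw [hQstar, ← hNreal, eq_div_iff hupos.ne']
      ring
    set D : ℝ := ∏ c, ((hstar c : ℝ) / Real.exp 1) ^ hstar c with hDdef
    set R : ℝ := ∏ c, ((m:ℝ) * p c / (hstar c : ℝ)) ^ hstar c with hRdef
    have hstarpos : ∀ c, (0:ℝ) < (hstar c : ℝ) := fun c => by exact_mod_cast hone c
    have hDpos : 0 < D :=
      Finset.prod_pos fun c _ => pow_pos (div_pos (hstarpos c) (Real.exp_pos 1)) _
    have hRle : R ≤ 1 := gibbs p hpos hsum m hm1 hstar hstarsum hone
    have hMP : ((m:ℝ)/Real.exp 1)^m * P = D * R := by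
      rw [hDdef, hRdef, ← Finset.prod_mul_distrib]
      have hterm : ∀ c ∈ (univ : Finset (Fin k)),
          ((hstar c : ℝ)/Real.exp 1)^(hstar c) * (((m:ℝ) * p c / (hstar c:ℝ)))^(hstar c)
          = ((m:ℝ)/Real.exp 1)^(hstar c) * p c ^ (hstar c) := by
        intro c _
        rw [← mul_pow, ← mul_pow]
        congr 1
        have h6 : ((hstar c : ℝ)) ≠ 0 := (hstarpos c).ne'
        have h7 : Real.exp 1 ≠ 0 := (Real.exp_pos 1).ne'
        field_simp
      rw [Finset.prod_congr rfl hterm, Finset.prod_mul_distrib,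
        Finset.prod_pow_eq_pow_sum, hstarsum, hPdef]
    set B : ℝ := c1 ^ k * ∏ c, Real.sqrt (2 * (hstar c : ℝ)) with hBdef
    have hsq : ∀ c, (0:ℝ) < Real.sqrt (2 * (hstar c:ℝ)) :=
      fun c => Real.sqrt_pos.mpr (mul_pos two_pos (hstarpos c))
    have hBpos : 0 < B := mul_pos (pow_pos hc1 k) (Finset.prod_pos fun c _ => hsq c)
    have huB : B * D ≤ (u:ℝ) := by
      have hcast : (u:ℝ) = ∏ c, ((hstar c)! : ℝ) := by rw [hudef]; push_cast; rfl
      have h1 : ∏ c, (c1 * (Real.sqrt (2*(hstar c:ℝ)) * ((hstar c:ℝ)/Real.exp 1)^(hstar c)))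
          ≤ ∏ c, ((hstar c)! :ℝ) := by
        refine Finset.prod_le_prod (fun c _ => ?_) (fun c _ => (hstir (hstar c) (hone c)).1)
        exact mul_nonneg hc1.le (mul_nonneg (Real.sqrt_nonneg _)
          (pow_nonneg (div_nonneg (Nat.cast_nonneg _) (Real.exp_pos 1).le) _))
      have h2 : ∏ c, (c1 * (Real.sqrt (2*(hstar c:ℝ)) * ((hstar c:ℝ)/Real.exp 1)^(hstar c)))
          = B * D := by
        rw [Finset.prod_mul_distrib, Finset.prod_const, Finset.prod_mul_distrib,
          hBdef, hDdef]
        simp only [Finset.card_univ, Fintype.card_fin]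
        ring
      rw [hcast, ← h2]
      exact h1
    have hnum : (m ! : ℝ) * P ≤ (c2 * Real.sqrt (2*(m:ℝ))) * (D * R) := by
      have h3 := (hstir m hm1).2
      calc (m ! :ℝ) * P ≤ (c2 * (Real.sqrt (2*(m:ℝ)) * ((m:ℝ)/Real.exp 1)^m)) * P :=
            mul_le_mul_of_nonneg_right h3 hPpos.le
        _ = (c2 * Real.sqrt (2*(m:ℝ))) * (((m:ℝ)/Real.exp 1)^m * P) := by ring
        _ = (c2 * Real.sqrt (2*(m:ℝ))) * (D * R) := by rw [hMP]
    have hRpos : 0 < R :=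
      Finset.prod_pos fun c _ => pow_pos (div_pos (mul_pos hmpos (hpos c)) (hstarpos c)) _
    have hfrac : Qf p m hstar ≤ ((c2 * Real.sqrt (2*(m:ℝ))) * (D*R)) / (B * D) := by
      rw [hQform]
      refine div_le_div₀ ?_ hnum (mul_pos hBpos hDpos) huB
      exact mul_nonneg (mul_nonneg hc2.le (Real.sqrt_nonneg _)) (mul_pos hDpos hRpos).le
    have hfrac2 : ((c2 * Real.sqrt (2*(m:ℝ))) * (D*R)) / (B * D)
        ≤ (c2 * Real.sqrt (2*(m:ℝ))) / B := by
      rw [div_le_div_iff₀ (mul_pos hBpos hDpos) hBpos]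
      have hX : (0:ℝ) ≤ c2 * Real.sqrt (2*(m:ℝ)) * D * B :=
        mul_nonneg (mul_nonneg (mul_nonneg hc2.le (Real.sqrt_nonneg _)) hDpos.le) hBpos.le
      calc c2 * Real.sqrt (2*(m:ℝ)) * (D*R) * B
          = R * (c2 * Real.sqrt (2*(m:ℝ)) * D * B) := by ring
        _ ≤ 1 * (c2 * Real.sqrt (2*(m:ℝ)) * D * B) :=
            mul_le_mul_of_nonneg_right hRle hX
        _ = c2 * Real.sqrt (2*(m:ℝ)) * (B * D) := by ring
    have hBlow : c1^k * ((Real.sqrt (m:ℝ))^k * ∏ c, Real.sqrt (p c)) ≤ B := by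
      rw [hBdef]
      refine mul_le_mul_of_nonneg_left ?_ (pow_pos hc1 k).le
      have hsplit : ∏ c : Fin k, (Real.sqrt (m:ℝ) * Real.sqrt (p c))
          = (Real.sqrt (m:ℝ))^k * ∏ c, Real.sqrt (p c) := by
        rw [Finset.prod_mul_distrib, Finset.prod_const]
        simp only [Finset.card_univ, Fintype.card_fin]
      rw [← hsplit]
      refine Finset.prod_le_prod (fun c _ => mul_nonneg (Real.sqrt_nonneg _) (Real.sqrt_nonneg _))
        (fun c _ => ?_)
      rw [← Real.sqrt_mul (Nat.cast_nonneg m)]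
      apply Real.sqrt_le_sqrt
      nlinarith [hhalf c]
    have hfrac3 : (c2 * Real.sqrt (2*(m:ℝ))) / B
        ≤ C0 * ((Real.sqrt (m:ℝ)) / (Real.sqrt (m:ℝ))^k) := by
      have hden : (0:ℝ) < c1^k * ((Real.sqrt (m:ℝ))^k * ∏ c, Real.sqrt (p c)) := by
        apply mul_pos (pow_pos hc1 k)
        apply mul_pos (pow_pos (Real.sqrt_pos.mpr hmpos) k) hprodp
      have h4 : (c2 * Real.sqrt (2*(m:ℝ))) / B
          ≤ (c2 * Real.sqrt (2*(m:ℝ))) / (c1^k * ((Real.sqrt (m:ℝ))^k * ∏ c, Real.sqrt (p c))) :=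
        div_le_div_of_nonneg_left (by positivity) hden hBlow
      refine le_trans h4 (le_of_eq ?_)
      rw [hC0def, Real.sqrt_mul (by norm_num : (0:ℝ) ≤ 2)]
      have hsm : Real.sqrt (m:ℝ) ≠ 0 := (Real.sqrt_pos.mpr hmpos).ne'
      field_simp
    have hrpow : (Real.sqrt (m:ℝ)) / (Real.sqrt (m:ℝ))^k = (m:ℝ) ^ (((1:ℝ) - k)/2) := by
      have h5 : ((1:ℝ) - (k:ℝ))/2 = 1/2 - (1/2) * (k:ℝ) := by ring
      rw [h5, Real.rpow_sub hmpos]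
      congr 1
      · rw [← Real.sqrt_eq_rpow]
      · rw [Real.rpow_mul hmpos.le, ← Real.sqrt_eq_rpow, Real.rpow_natCast]
    calc Qf p m hstar ≤ ((c2 * Real.sqrt (2*(m:ℝ))) * (D*R)) / (B * D) := hfrac
      _ ≤ (c2 * Real.sqrt (2*(m:ℝ))) / B := hfrac2
      _ ≤ C0 * ((Real.sqrt (m:ℝ)) / (Real.sqrt (m:ℝ))^k) := hfrac3
      _ = C0 * (m:ℝ) ^ (((1:ℝ) - k)/2) := by rw [hrpow]
  -- combine with small m
  set C1 : ℝ := (M:ℝ) ^ (((k:ℝ) - 1)/2) + 1 with hC1def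
  have hC1 : 0 < C1 := by positivity
  refine ⟨C0 + C1, by positivity, fun m hm1 h => ?_⟩
  have hmpos : (0:ℝ) < (m:ℝ) := by exact_mod_cast hm1
  have hrpos : (0:ℝ) < (m:ℝ) ^ (((1:ℝ)-(k:ℝ))/2) := Real.rpow_pos_of_pos hmpos _
  by_cases hmM : M ≤ m
  · calc Qf p m h ≤ C0 * (m:ℝ) ^ (((1:ℝ)-(k:ℝ))/2) := main m hmM h
      _ ≤ (C0 + C1) * (m:ℝ) ^ (((1:ℝ)-(k:ℝ))/2) := by nlinarith [mul_pos hC1 hrpos, mul_pos hC0 hrpos]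
  · have hq1 : Qf p m h ≤ 1 := Qf_le_one p hpos hsum m h
    have hmleM : (m:ℝ) ≤ (M:ℝ) := by
      have := le_of_lt (not_le.mp hmM)
      exact_mod_cast this
    have hkexp : (0:ℝ) ≤ ((k:ℝ) - 1)/2 := by
      have : (2:ℝ) ≤ (k:ℝ) := by exact_mod_cast hk
      linarith
    have hx : (m:ℝ)^(((k:ℝ)-1)/2) ≤ C1 := by
      refine le_trans (Real.rpow_le_rpow hmpos.le hmleM hkexp) ?_
      rw [hC1def]
      linarith
    have he : (m:ℝ) ^ (((1:ℝ)-(k:ℝ))/2) = ((m:ℝ) ^ (((k:ℝ)-1)/2))⁻¹ := by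
      rw [← Real.rpow_neg hmpos.le]
      congr 1
      ring
    have hxpos : (0:ℝ) < (m:ℝ)^(((k:ℝ)-1)/2) := Real.rpow_pos_of_pos hmpos _
    have hone' : (1:ℝ) ≤ C1 * (m:ℝ) ^ (((1:ℝ)-(k:ℝ))/2) := by
      rw [he]
      have := mul_le_mul_of_nonneg_right hx (inv_nonneg.mpr hxpos.le)
      rwa [mul_inv_cancel₀ hxpos.ne'] at this
    calc Qf p m h ≤ 1 := hq1
      _ ≤ C1 * (m:ℝ) ^ (((1:ℝ)-(k:ℝ))/2) := hone'
      _ ≤ (C0 + C1) * (m:ℝ) ^ (((1:ℝ)-(k:ℝ))/2) := by nlinarith [mul_pos hC1 hrpos, mul_pos hC0 hrpos]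


section SvalSec

variable {k : ℕ} (p : Fin k → ℝ)

/-- collision probability -/
noncomputable def Sval (M : ℕ) : ℝ :=
  ∑ X : Fin M → Fin k, ∑ Y : Fin M → Fin k,
    (∏ j, p (X j)) * (∏ j, p (Y j)) * (if hist X = hist Y then 1 else 0)

lemma Sval_nonneg (hpos : ∀ i, 0 < p i) (M : ℕ) : 0 ≤ Sval p M := by
  refine Finset.sum_nonneg fun X _ => Finset.sum_nonneg fun Y _ => ?_
  refine mul_nonneg (mul_nonneg ?_ ?_) ?_
  · exact Finset.prod_nonneg fun j _ => (hpos (X j)).le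
  · exact Finset.prod_nonneg fun j _ => (hpos (Y j)).le
  · split <;> norm_num

lemma Sval_eq (M : ℕ) :
    Sval p M = ∑ X : Fin M → Fin k, (∏ j, p (X j)) * Qf p M (hist X) := by
  classical
  refine Finset.sum_congr rfl fun X _ => ?_
  rw [Qf, Finset.sum_filter, Finset.mul_sum]
  refine Finset.sum_congr rfl fun Y _ => ?_
  by_cases hXY : hist Y = hist X
  · rw [if_pos hXY, if_pos hXY.symm, mul_one]
  · rw [if_neg hXY, if_neg (fun hc => hXY hc.symm), mul_zero, mul_zero]

lemma Sval_le (hk : 2 ≤ k) (hpos : ∀ i, 0 < p i) (hsum : ∑ i, p i = 1) :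
    ∃ C : ℝ, 0 < C ∧ ∀ M : ℕ, 1 ≤ M →
      Sval p M ≤ C * (M : ℝ) ^ (((1:ℝ) - k) / 2) := by
  obtain ⟨C, hC, hQ⟩ := Qf_le hk p hpos hsum
  refine ⟨C, hC, fun M hM => ?_⟩
  rw [Sval_eq]
  calc ∑ X : Fin M → Fin k, (∏ j, p (X j)) * Qf p M (hist X)
      ≤ ∑ X : Fin M → Fin k, (∏ j, p (X j)) * (C * (M : ℝ) ^ (((1:ℝ) - k) / 2)) := by
        refine Finset.sum_le_sum fun X _ => ?_
        exact mul_le_mul_of_nonneg_left (hQ M hM (hist X))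
          (Finset.prod_nonneg fun j _ => (hpos (X j)).le)
    _ = (∑ X : Fin M → Fin k, ∏ j, p (X j)) * (C * (M : ℝ) ^ (((1:ℝ) - k) / 2)) := by
        rw [Finset.sum_mul]
    _ = C * (M : ℝ) ^ (((1:ℝ) - k) / 2) := by rw [sum_w p hsum M, one_mul]

end SvalSec

end HistAux

open Classical in
/-- Lemma 1, asymptotic uniqueness of histograms: for a distribution `p`
over `k ≥ 2` categories with all probabilities positive, if `m_n = ω(n^{4/(k-1)})`, then
`n² · Pr(two independent Multinomial(m_n, p) histograms coincide) → 0`. -/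
theorem histogram_collision_tendsto_zero (k : ℕ) (hk : 2 ≤ k)
    (p : Fin k → ℝ) (hpos : ∀ i, 0 < p i) (hsum : ∑ i, p i = 1)
    (m : ℕ → ℕ)
    (hm : Tendsto (fun n => (m n : ℝ) / (n : ℝ) ^ ((4 : ℝ) / ((k : ℝ) - 1))) atTop atTop) :
    Tendsto (fun n : ℕ => (n : ℝ) ^ 2 *
        ∑ X : Fin (m n) → Fin k, ∑ Y : Fin (m n) → Fin k,
          (∏ j, p (X j)) * (∏ j, p (Y j)) *
            (if ∀ c : Fin k,
                (Finset.univ.filter fun j => X j = c).card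
                  = (Finset.univ.filter fun j => Y j = c).card
              then 1 else 0))
      atTop (nhds 0) := by
  have hrw : ∀ M : ℕ,
      (∑ X : Fin M → Fin k, ∑ Y : Fin M → Fin k,
          (∏ j, p (X j)) * (∏ j, p (Y j)) *
            (if ∀ c : Fin k,
                (Finset.univ.filter fun j => X j = c).card
                  = (Finset.univ.filter fun j => Y j = c).card
              then 1 else 0)) = HistAux.Sval p M := by
    intro M
    refine Finset.sum_congr rfl fun X _ => Finset.sum_congr rfl fun Y _ => ?_
    congr 1
    refine if_congr ?_ rfl rfl
    constructor
    · intro hc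
      funext c
      have := hc c
      simpa [HistAux.hist] using this
    · intro hc c
      have := congrFun hc c
      simpa [HistAux.hist] using this
  obtain ⟨C, hC, hS⟩ := HistAux.Sval_le p hk hpos hsum
  have hk1 : (0:ℝ) < (k:ℝ) - 1 := by
    have : (2:ℝ) ≤ (k:ℝ) := by exact_mod_cast hk
    linarith
  set e : ℝ := ((k:ℝ) - 1)/2 with hedef
  have he : 0 < e := by rw [hedef]; positivity
  have hupper : Tendsto
      (fun n => C * ((m n : ℝ) / (n:ℝ) ^ ((4:ℝ)/((k:ℝ)-1))) ^ (-e)) atTop (nhds 0) := by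
    have h0 := (tendsto_rpow_neg_atTop he).comp hm
    have h1 := h0.const_mul C
    simpa using h1
  refine tendsto_of_tendsto_of_tendsto_of_le_of_le' tendsto_const_nhds hupper ?_ ?_
  · filter_upwards with n
    rw [hrw (m n)]
    exact mul_nonneg (by positivity) (HistAux.Sval_nonneg p hpos (m n))
  · have hev1 : ∀ᶠ n in atTop, (1:ℝ) ≤ (m n : ℝ) / (n:ℝ) ^ ((4:ℝ)/((k:ℝ)-1)) :=
      hm.eventually_ge_atTop 1
    filter_upwards [hev1, eventually_ge_atTop 1] with n hr hn1
    rw [hrw (m n)]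
    have hnR : (1:ℝ) ≤ (n:ℝ) := by exact_mod_cast hn1
    have hnpos : (0:ℝ) < (n:ℝ) := by linarith
    have hgpos : (0:ℝ) < (n:ℝ) ^ ((4:ℝ)/((k:ℝ)-1)) := Real.rpow_pos_of_pos hnpos _
    have hg1 : (1:ℝ) ≤ (n:ℝ) ^ ((4:ℝ)/((k:ℝ)-1)) := by
      have h2 : (1:ℝ) ^ ((4:ℝ)/((k:ℝ)-1)) ≤ (n:ℝ) ^ ((4:ℝ)/((k:ℝ)-1)) :=
        Real.rpow_le_rpow (by norm_num) hnR (by positivity)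
      rwa [Real.one_rpow] at h2
    have hm1R : (1:ℝ) ≤ (m n : ℝ) := by
      rw [le_div_iff₀ hgpos, one_mul] at hr
      linarith
    have hmpos : (0:ℝ) < (m n : ℝ) := by linarith
    have hm1 : 1 ≤ m n := by exact_mod_cast hm1R
    have hid : ((m n : ℝ) / (n:ℝ) ^ ((4:ℝ)/((k:ℝ)-1))) ^ (-e)
        = (n:ℝ)^2 * (m n : ℝ) ^ (((1:ℝ)-(k:ℝ))/2) := by
      have h1 : ((m n : ℝ) / (n:ℝ) ^ ((4:ℝ)/((k:ℝ)-1))) ^ (-e)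
          = (m n : ℝ) ^ (-e) * ((n:ℝ) ^ ((4:ℝ)/((k:ℝ)-1))) ^ e := by
        rw [Real.div_rpow hmpos.le hgpos.le, Real.rpow_neg hgpos.le,
          div_eq_mul_inv, inv_inv]
      have h2 : ((n:ℝ) ^ ((4:ℝ)/((k:ℝ)-1))) ^ e = (n:ℝ)^2 := by
        rw [← Real.rpow_natCast (n:ℝ) 2, ← Real.rpow_mul hnpos.le]
        congr 1
        rw [hedef]
        push_cast
        field_simp
        ring
      have h3 : (m n : ℝ)^(-e) = (m n : ℝ) ^ (((1:ℝ)-(k:ℝ))/2) := by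
        congr 1
        rw [hedef]
        ring
      rw [h1, h2, h3]
      ring
    rw [hid]
    have hSb := hS (m n) hm1
    calc (n:ℝ)^2 * HistAux.Sval p (m n)
        ≤ (n:ℝ)^2 * (C * (m n : ℝ) ^ (((1:ℝ)-(k:ℝ))/2)) :=
          mul_le_mul_of_nonneg_left hSb (by positivity)
      _ = C * ((n:ℝ)^2 * (m n : ℝ) ^ (((1:ℝ)-(k:ℝ))/2)) := by ring
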